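/- arXiv:2411.14813 — 7 statements merged into one kernel-verified Lean document; each statement's English description precedes it below -/
import Mathlib

section
/- Let F : C ⥤ D be a left multiadjoint and let M be a left-cancellable composable class of morphisms in D. Then the restriction of F to a functor C_{F⁻¹(M)} ⥤ D_M reflects amalgamation of squares. -/
open CategoryTheory

universe w v u v' u'

variable {C : Type u} [Category.{v} C] {D : Type u'} [Category.{v'} D]

/-- An independence relation on a category: a class of (commuting) squares,
given by their four morphisms `X ⟶ A`, `X ⟶ B`, `A ⟶ M`, `B ⟶ M`. -/
def IndRel (C : Type u) [Category.{v} C] :=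
  ∀ ⦃X A B M : C⦄, (X ⟶ A) → (X ⟶ B) → (A ⟶ M) → (B ⟶ M) → Prop

/-- The lift of an independence relation along a functor. -/
def IndRel.lift (F : C ⥤ D) (R : IndRel D) : IndRel C :=
  fun _ _ _ _ xa xb am bm => R (F.map xa) (F.map xb) (F.map am) (F.map bm)

/-- `F` is a left multiadjoint: every object of `D` admits a family of morphisms
from `F`-images through which every morphism from an `F`-image factors via a
unique index and a unique morphism. -/
def IsLeftMultiadjoint (F : C ⥤ D) : Prop :=
  ∀ d : D, ∃ (I : Type w) (c : I → C) (e : ∀ i, F.obj (c i) ⟶ d),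
    ∀ (X : C) (f : F.obj X ⟶ d),
      ∃! p : (i : I) × (X ⟶ c i), F.map p.2 ≫ e p.1 = f

/-- A left multiadjoint restricts, over a left-cancellable composable class `M`
of morphisms, to a functor `C_{F⁻¹(M)} ⥤ D_M` that reflects amalgamation of
squares: if the images of two squares (with all morphisms in the relevant
classes) sharing a base span can be amalgamated in `D_M`, then the original
squares can be amalgamated in `C_{F⁻¹(M)}`. -/
theorem left_multiadjoint_reflects_amalgamation
    (F : C ⥤ D) (hF : IsLeftMultiadjoint.{w} F)
    (Mm : MorphismProperty D)
    (hcomp : ∀ ⦃X Y Z : D⦄ (f : X ⟶ Y) (g : Y ⟶ Z), Mm f → Mm g → Mm (f ≫ g))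
    (hiso : ∀ ⦃X Y : D⦄ (f : X ⟶ Y), IsIso f → Mm f)
    (hcancel : ∀ ⦃X Y Z : D⦄ (f : X ⟶ Y) (g : Y ⟶ Z), Mm (f ≫ g) → Mm f)
    {X A B M₁ M₂ : C} (xa : X ⟶ A) (xb : X ⟶ B)
    (am : A ⟶ M₁) (bm : B ⟶ M₁) (am' : A ⟶ M₂) (bm' : B ⟶ M₂)
    (hxa : Mm (F.map xa)) (hxb : Mm (F.map xb))
    (ham : Mm (F.map am)) (hbm : Mm (F.map bm))
    (ham' : Mm (F.map am')) (hbm' : Mm (F.map bm'))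
    (hsq : xa ≫ am = xb ≫ bm) (hsq' : xa ≫ am' = xb ≫ bm')
    (hamalg : ∃ (E : D) (f : F.obj M₁ ⟶ E) (g : F.obj M₂ ⟶ E),
      Mm f ∧ Mm g ∧ F.map am ≫ f = F.map am' ≫ g ∧ F.map bm ≫ f = F.map bm' ≫ g) :
    ∃ (E : C) (f : M₁ ⟶ E) (g : M₂ ⟶ E),
      Mm (F.map f) ∧ Mm (F.map g) ∧ am ≫ f = am' ≫ g ∧ bm ≫ f = bm' ≫ g := by
  obtain ⟨E, f, g, hf, hg, h1, h2⟩ := hamalg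
  obtain ⟨I, c, e, he⟩ := hF E
  obtain ⟨⟨i, u⟩, hu, -⟩ := he M₁ f
  obtain ⟨⟨j, v⟩, hv, -⟩ := he M₂ g
  obtain ⟨pA, -, hpA⟩ := he A (F.map am ≫ f)
  obtain ⟨pB, -, hpB⟩ := he B (F.map bm ≫ f)
  have hA1 : F.map (am ≫ u) ≫ e i = F.map am ≫ f := by
    rw [F.map_comp, Category.assoc, hu]
  have hA2 : F.map (am' ≫ v) ≫ e j = F.map am ≫ f := by
    rw [F.map_comp, Category.assoc, hv, h1]
  have hB1 : F.map (bm ≫ u) ≫ e i = F.map bm ≫ f := by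
    rw [F.map_comp, Category.assoc, hu]
  have hB2 : F.map (bm' ≫ v) ≫ e j = F.map bm ≫ f := by
    rw [F.map_comp, Category.assoc, hv, h2]
  have hAe : (⟨i, am ≫ u⟩ : (i : I) × (A ⟶ c i)) = ⟨j, am' ≫ v⟩ :=
    ((hpA ⟨i, am ≫ u⟩ hA1).trans (hpA ⟨j, am' ≫ v⟩ hA2).symm)
  have hBe : (⟨i, bm ≫ u⟩ : (i : I) × (B ⟶ c i)) = ⟨j, bm' ≫ v⟩ :=
    ((hpB ⟨i, bm ≫ u⟩ hB1).trans (hpB ⟨j, bm' ≫ v⟩ hB2).symm)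
  obtain ⟨rfl, hA⟩ := Sigma.mk.inj_iff.mp hAe
  obtain ⟨-, hB⟩ := Sigma.mk.inj_iff.mp hBe
  refine ⟨c i, u, v, ?_, ?_, eq_of_heq hA, eq_of_heq hB⟩
  · exact hcancel _ (e i) (hu ▸ hf)
  · exact hcancel _ (e i) (hv ▸ hg)
end

section
/- Let F : C ⥤ D be a left multiadjoint, M a left-cancellable composable class of morphisms in D, and ⫝ an independence relation on D_M satisfying uniqueness. Then the lifted independence relation F⁻¹(⫝) on C_{F⁻¹(M)} satisfies uniqueness. -/
open CategoryTheory

universe w v u v' u'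

variable {C : Type u} [Category.{v} C] {D : Type u'} [Category.{v'} D]

/-- Uniqueness lifts along a left multiadjoint: if `⫝` is an independence
relation on the wide subcategory `D_M` satisfying uniqueness, then the lifted
relation `F⁻¹(⫝)` on `C_{F⁻¹(M)}` satisfies uniqueness. -/
theorem left_multiadjoint_lifts_uniqueness
    (F : C ⥤ D) (hF : IsLeftMultiadjoint.{w} F)
    (Mm : MorphismProperty D)
    (hcomp : ∀ ⦃X Y Z : D⦄ (f : X ⟶ Y) (g : Y ⟶ Z), Mm f → Mm g → Mm (f ≫ g))
    (hiso : ∀ ⦃X Y : D⦄ (f : X ⟶ Y), IsIso f → Mm f)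
    (hcancel : ∀ ⦃X Y Z : D⦄ (f : X ⟶ Y) (g : Y ⟶ Z), Mm (f ≫ g) → Mm f)
    (R : IndRel D)
    -- uniqueness of `⫝` on `D_M`
    (hU : ∀ ⦃X A B M₁ M₂ : D⦄ (xa : X ⟶ A) (xb : X ⟶ B)
      (am : A ⟶ M₁) (bm : B ⟶ M₁) (am' : A ⟶ M₂) (bm' : B ⟶ M₂),
      Mm xa → Mm xb → Mm am → Mm bm → Mm am' → Mm bm' →
      xa ≫ am = xb ≫ bm → xa ≫ am' = xb ≫ bm' →
      R xa xb am bm → R xa xb am' bm' →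
      ∃ (E : D) (f : M₁ ⟶ E) (g : M₂ ⟶ E),
        Mm f ∧ Mm g ∧ am ≫ f = am' ≫ g ∧ bm ≫ f = bm' ≫ g) :
    -- uniqueness of `F⁻¹(⫝)` on `C_{F⁻¹(M)}`
    ∀ ⦃X A B M₁ M₂ : C⦄ (xa : X ⟶ A) (xb : X ⟶ B)
      (am : A ⟶ M₁) (bm : B ⟶ M₁) (am' : A ⟶ M₂) (bm' : B ⟶ M₂),
      Mm (F.map xa) → Mm (F.map xb) → Mm (F.map am) → Mm (F.map bm) →
      Mm (F.map am') → Mm (F.map bm') →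
      xa ≫ am = xb ≫ bm → xa ≫ am' = xb ≫ bm' →
      R.lift F xa xb am bm → R.lift F xa xb am' bm' →
      ∃ (E : C) (f : M₁ ⟶ E) (g : M₂ ⟶ E),
        Mm (F.map f) ∧ Mm (F.map g) ∧ am ≫ f = am' ≫ g ∧ bm ≫ f = bm' ≫ g := by
  intro X A B M₁ M₂ xa xb am bm am' bm' h1 h2 h3 h4 h5 h6 hsq hsq' hR hR'
  have hsqD : F.map xa ≫ F.map am = F.map xb ≫ F.map bm := by
    rw [← F.map_comp, ← F.map_comp, hsq]
  have hsqD' : F.map xa ≫ F.map am' = F.map xb ≫ F.map bm' := by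
    rw [← F.map_comp, ← F.map_comp, hsq']
  obtain ⟨E, f, g, hf, hg, ha, hb⟩ :=
    hU _ _ _ _ _ _ h1 h2 h3 h4 h5 h6 hsqD hsqD' hR hR'
  obtain ⟨I, c, e, he⟩ := hF E
  obtain ⟨⟨i, f'⟩, hfi, -⟩ := he M₁ f
  obtain ⟨⟨j, g'⟩, hgj, -⟩ := he M₂ g
  obtain ⟨pA, -, huA⟩ := he A (F.map am ≫ f)
  obtain ⟨pB, -, huB⟩ := he B (F.map bm ≫ f)
  have e1 : (⟨i, am ≫ f'⟩ : (i : I) × (A ⟶ c i)) = ⟨j, am' ≫ g'⟩ := by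
    rw [huA ⟨i, am ≫ f'⟩ (by simp [hfi]),
        huA ⟨j, am' ≫ g'⟩ (by rw [ha]; simp [hgj])]
  obtain ⟨rfl, hA⟩ := Sigma.mk.inj_iff.mp e1
  rw [heq_eq_eq] at hA
  have e2 : (⟨i, bm ≫ f'⟩ : (i : I) × (B ⟶ c i)) = ⟨i, bm' ≫ g'⟩ := by
    rw [huB ⟨i, bm ≫ f'⟩ (by simp [hfi]),
        huB ⟨i, bm' ≫ g'⟩ (by rw [hb]; simp [hgj])]
  have hB : bm ≫ f' = bm' ≫ g' := by
    simpa using (Sigma.mk.inj_iff.mp e2).2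
  exact ⟨c i, f', g', hcancel _ _ (by rw [hfi]; exact hf),
    hcancel _ _ (by rw [hgj]; exact hg), hA, hB⟩
end

section
/- Let F : C ⥤ D be a faithful functor and ⫝ an independence relation on D satisfying invariance. If F admits 2-completions with respect to ⫝ and ⫝ satisfies existence, then the lifted relation F⁻¹(⫝) satisfies existence: every span in C can be completed to an F⁻¹(⫝)-independent commuting square. -/
open CategoryTheory

universe w v u v' u'

variable {C : Type u} [Category.{v} C] {D : Type u'} [Category.{v'} D]

/-- Basic existence: any commuting square whose left or bottom morphism is an
isomorphism is independent. -/
def IndRel.BasicExistence (R : IndRel D) : Prop :=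
  ∀ ⦃X A B M : D⦄ (xa : X ⟶ A) (xb : X ⟶ B) (am : A ⟶ M) (bm : B ⟶ M),
    xa ≫ am = xb ≫ bm → (IsIso xa ∨ IsIso xb) → R xa xb am bm

/-- Invariance: post-composing the ambient object of a commuting square along a
morphism preserves and reflects independence. -/
def IndRel.Invariance (R : IndRel D) : Prop :=
  ∀ ⦃X A B M N : D⦄ (xa : X ⟶ A) (xb : X ⟶ B) (am : A ⟶ M) (bm : B ⟶ M)
    (mn : M ⟶ N), xa ≫ am = xb ≫ bm →
    (R xa xb am bm ↔ R xa xb (am ≫ mn) (bm ≫ mn))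

/-- `F` admits 1-completions: every morphism `F(A) ⟶ B` is "completed" by a
morphism `A ⟶ E` of `C` whose image factors through it. -/
def Admits1Completions (F : C ⥤ D) : Prop :=
  ∀ (A : C) (B : D) (f : F.obj A ⟶ B),
    ∃ (E : C) (g : A ⟶ E) (h : B ⟶ F.obj E), F.map g = f ≫ h

/-- `F` admits 2-completions with respect to `⫝`: every `⫝`-independent
commuting square whose base span is in the image of `F` can be completed into
the image of `F`. -/
def Admits2Completions (F : C ⥤ D) (R : IndRel D) : Prop :=
  ∀ ⦃X A B : C⦄ ⦃D₀ : D⦄ (xa : X ⟶ A) (xb : X ⟶ B)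
    (ad : F.obj A ⟶ D₀) (bd : F.obj B ⟶ D₀),
    F.map xa ≫ ad = F.map xb ≫ bd →
    R (F.map xa) (F.map xb) ad bd →
    ∃ (E : C) (f : A ⟶ E) (g : B ⟶ E) (h : D₀ ⟶ F.obj E),
      F.map f = ad ≫ h ∧ F.map g = bd ≫ h

/-- Existence: every span can be completed to an independent commuting square. -/
def IndRel.Existence (R : IndRel D) : Prop :=
  ∀ ⦃X A B : D⦄ (xa : X ⟶ A) (xb : X ⟶ B),
    ∃ (M : D) (am : A ⟶ M) (bm : B ⟶ M), xa ≫ am = xb ≫ bm ∧ R xa xb am bm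

/-- If `F` is faithful, `⫝` satisfies invariance and existence, and `F` admits
2-completions, then the lifted relation `F⁻¹(⫝)` satisfies existence. -/
theorem admits2_lifts_existence (F : C ⥤ D) [F.Faithful] (R : IndRel D)
    (hinv : R.Invariance) (hex : R.Existence) (h2 : Admits2Completions F R) :
    ∀ ⦃X A B : C⦄ (xa : X ⟶ A) (xb : X ⟶ B),
      ∃ (M : C) (am : A ⟶ M) (bm : B ⟶ M),
        xa ≫ am = xb ≫ bm ∧ R.lift F xa xb am bm := by
  intro X A B xa xb
  obtain ⟨M, am, bm, hcomm, hR⟩ := hex (F.map xa) (F.map xb)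
  obtain ⟨E, f, g, h, hf, hg⟩ := h2 xa xb am bm hcomm hR
  refine ⟨E, f, g, ?_, ?_⟩
  · apply F.map_injective
    simp only [F.map_comp, hf, hg]
    rw [← Category.assoc, ← Category.assoc, hcomm]
  · show R (F.map xa) (F.map xb) (F.map f) (F.map g)
    rw [hf, hg]
    exact (hinv _ _ _ _ h hcomm).mp hR
end

section
/- Let F : C ⥤ D be a faithful functor and ⫝ an independence relation on D satisfying invariance and uniqueness. Suppose F admits 1-completions and that the lifted relation F⁻¹(⫝) satisfies existence. Then F admits 2-completions with respect to ⫝. -/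
open CategoryTheory

universe w v u v' u'

variable {C : Type u} [Category.{v} C] {D : Type u'} [Category.{v'} D]

/-- Uniqueness: any two independent squares sharing the same base span can be
amalgamated. -/
def IndRel.Uniqueness (R : IndRel D) : Prop :=
  ∀ ⦃X A B M₁ M₂ : D⦄ (xa : X ⟶ A) (xb : X ⟶ B)
    (am : A ⟶ M₁) (bm : B ⟶ M₁) (am' : A ⟶ M₂) (bm' : B ⟶ M₂),
    xa ≫ am = xb ≫ bm → xa ≫ am' = xb ≫ bm' →
    R xa xb am bm → R xa xb am' bm' →
    ∃ (E : D) (f : M₁ ⟶ E) (g : M₂ ⟶ E),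
      am ≫ f = am' ≫ g ∧ bm ≫ f = bm' ≫ g

/-- If `F` is faithful, `⫝` satisfies invariance and uniqueness, `F` admits
1-completions, and the lifted relation `F⁻¹(⫝)` satisfies existence, then `F`
admits 2-completions with respect to `⫝`. -/
theorem admits1_existence_implies_admits2 (F : C ⥤ D) [F.Faithful] (R : IndRel D)
    (hinv : R.Invariance) (huniq : R.Uniqueness) (h1 : Admits1Completions F)
    (hexlift : ∀ ⦃X A B : C⦄ (xa : X ⟶ A) (xb : X ⟶ B),
      ∃ (M : C) (am : A ⟶ M) (bm : B ⟶ M),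
        xa ≫ am = xb ≫ bm ∧ R.lift F xa xb am bm) :
    Admits2Completions F R := by
  intro X A B D₀ xa xb ad bd hcomm hR
  obtain ⟨M, am, bm, hMcomm, hMR⟩ := hexlift xa xb
  obtain ⟨E₀, f₁, g₁, hf₁, hg₁⟩ := huniq (F.map xa) (F.map xb) (F.map am) (F.map bm)
    ad bd (by rw [← F.map_comp, ← F.map_comp, hMcomm]) hcomm hMR hR
  obtain ⟨E, g, h, hgh⟩ := h1 M E₀ f₁
  refine ⟨E, am ≫ g, bm ≫ g, g₁ ≫ h, ?_, ?_⟩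
  · rw [F.map_comp, hgh, ← Category.assoc, hf₁, Category.assoc]
  · rw [F.map_comp, hgh, ← Category.assoc, hg₁, Category.assoc]
end

section
/- Let C be a category with a factorization system (E, M) where M consists of monomorphisms. Given a commuting square with morphisms X→A, X→B, a : A → D in M and b : B → D in M, and suppose the multipushout of the span A ← X → B exists. Let P be the instance of the multipushout admitting a morphism p : P → D compatible with a and b, and let P ↠ J ↪ D be the (E,M)-factorization of p. Then J, with its M-morphism into D, is the join A ∨ B of the subobjects A and B of D in the wide subcategory C_M. -/
open CategoryTheory

universe w v u

variable {C : Type u} [Category.{v} C]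

/-- Multipushout data for a span `A ← X → B`: a family of cocones through
exactly one of which every cocone factors uniquely. -/
structure Multipushout {X A B : C} (xa : X ⟶ A) (xb : X ⟶ B) where
  ι : Type w
  pt : ι → C
  inl : ∀ i, A ⟶ pt i
  inr : ∀ i, B ⟶ pt i
  cocone : ∀ i, xa ≫ inl i = xb ≫ inr i
  universal : ∀ ⦃Q : C⦄ (q : A ⟶ Q) (r : B ⟶ Q), xa ≫ q = xb ≫ r →
    ∃! p : (i : ι) × (pt i ⟶ Q), inl p.1 ≫ p.2 = q ∧ inr p.1 ≫ p.2 = r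

/-- Computing binary joins of subobjects in `C_M` from a factorization system
`(E, M)` with `M` consisting of monomorphisms: given a commuting square with
`a : A ⟶ D` and `b : B ⟶ D` in `M`, let `P` be the instance of the multipushout
of the span admitting a morphism `p` to `D`, and factor `p` as an `E`-morphism
followed by an `M`-morphism `mj : J ⟶ D`. Then `J` is the join `A ∨ B` of the
subobjects `A`, `B` of `D` in `C_M`: `a` and `b` factor through `mj` via
`M`-morphisms, and `J` is least among such `M`-subobjects. -/
theorem multipushout_factorization_computes_join
    (Em Mm : MorphismProperty C)
    (hMmono : ∀ ⦃X Y : C⦄ (f : X ⟶ Y), Mm f → Mono f)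
    (hMcomp : ∀ ⦃X Y Z : C⦄ (f : X ⟶ Y) (g : Y ⟶ Z), Mm f → Mm g → Mm (f ≫ g))
    (hMiso : ∀ ⦃X Y : C⦄ (f : X ⟶ Y), IsIso f → Mm f)
    (hMcancel : ∀ ⦃X Y Z : C⦄ (f : X ⟶ Y) (g : Y ⟶ Z), Mm (f ≫ g) → Mm g → Mm f)
    (hfact : ∀ ⦃X Y : C⦄ (f : X ⟶ Y),
      ∃ (Z : C) (e : X ⟶ Z) (m : Z ⟶ Y), Em e ∧ Mm m ∧ e ≫ m = f)
    (hlift : ∀ ⦃X Y Z W : C⦄ (e : X ⟶ Y) (m : Z ⟶ W) (u : X ⟶ Z) (v : Y ⟶ W),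
      Em e → Mm m → u ≫ m = e ≫ v → ∃ d : Y ⟶ Z, e ≫ d = u ∧ d ≫ m = v)
    {X A B D : C} (xa : X ⟶ A) (xb : X ⟶ B) (a : A ⟶ D) (b : B ⟶ D)
    (hMa : Mm a) (hMb : Mm b) (hsq : xa ≫ a = xb ≫ b)
    (MP : Multipushout.{w} xa xb)
    (i : MP.ι) (p : MP.pt i ⟶ D)
    (hpa : MP.inl i ≫ p = a) (hpb : MP.inr i ≫ p = b)
    {J : C} (ep : MP.pt i ⟶ J) (mj : J ⟶ D)
    (hep : Em ep) (hmj : Mm mj) (hfactp : ep ≫ mj = p) :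
    Mm (MP.inl i ≫ ep) ∧ (MP.inl i ≫ ep) ≫ mj = a ∧
    Mm (MP.inr i ≫ ep) ∧ (MP.inr i ≫ ep) ≫ mj = b ∧
    ∀ ⦃E₀ : C⦄ (e : E₀ ⟶ D) (fa : A ⟶ E₀) (fb : B ⟶ E₀),
      Mm e → fa ≫ e = a → fb ≫ e = b →
      ∃ u : J ⟶ E₀, Mm u ∧ u ≫ e = mj := by
  have h1 : (MP.inl i ≫ ep) ≫ mj = a := by rw [Category.assoc, hfactp, hpa]
  have h2 : (MP.inr i ≫ ep) ≫ mj = b := by rw [Category.assoc, hfactp, hpb]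
  refine ⟨hMcancel _ _ (h1 ▸ hMa) hmj, h1, hMcancel _ _ (h2 ▸ hMb) hmj, h2, ?_⟩
  intro E₀ e fa fb hMe hfa hfb
  have hMe' := hMmono e hMe
  have hcoc : xa ≫ fa = xb ≫ fb := by
    have : (xa ≫ fa) ≫ e = (xb ≫ fb) ≫ e := by
      rw [Category.assoc, Category.assoc, hfa, hfb, hsq]
    exact (cancel_mono e).mp this
  obtain ⟨⟨j, q⟩, ⟨hq1, hq2⟩, huniq⟩ := MP.universal fa fb hcoc
  -- Both ⟨j, q ≫ e⟩ and ⟨i, p⟩ factor the cocone (a, b) to D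
  obtain ⟨⟨j', q'⟩, _, huniqD⟩ := MP.universal a b hsq
  have e1 : (⟨j, q ≫ e⟩ : (k : MP.ι) × (MP.pt k ⟶ D)) = ⟨j', q'⟩ :=
    huniqD _ ⟨by rw [← Category.assoc, hq1, hfa], by rw [← Category.assoc, hq2, hfb]⟩
  have e2 : (⟨i, p⟩ : (k : MP.ι) × (MP.pt k ⟶ D)) = ⟨j', q'⟩ :=
    huniqD _ ⟨hpa, hpb⟩
  have e3 : (⟨j, q ≫ e⟩ : (k : MP.ι) × (MP.pt k ⟶ D)) = ⟨i, p⟩ := e1.trans e2.symm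
  obtain ⟨rfl, hh⟩ := Sigma.mk.inj_iff.mp e3
  have hqe : q ≫ e = p := eq_of_heq hh
  obtain ⟨d, hd1, hd2⟩ := hlift ep e q mj hep hMe (by rw [hqe, hfactp])
  exact ⟨d, hMcancel _ _ (hd2.symm ▸ hmj) hMe, hd2⟩
end

section
/- Let F : C ⥤ D be a faithful functor, and suppose ⫝ is an independence relation on D satisfying invariance and strong 3-amalgamation. If F admits 3-completions with respect to ⫝, then the lifted relation F⁻¹(⫝) satisfies strong 3-amalgamation. -/
open CategoryTheory

universe w v u v' u'

variable {C : Type u} [Category.{v} C] {D : Type u'} [Category.{v'} D]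

/-- Strong 3-amalgamation: every independent horn can be completed to a
commuting cube all of whose faces are independent squares. -/
def IndRel.Strong3Amalgamation {E : Type*} [Category E] (R : IndRel E) : Prop :=
  ∀ ⦃M₀ A B X N₁ N₂ N₃ : E⦄
    (ma : M₀ ⟶ A) (mb : M₀ ⟶ B) (mc : M₀ ⟶ X)
    (an1 : A ⟶ N₁) (bn1 : B ⟶ N₁) (an2 : A ⟶ N₂) (cn2 : X ⟶ N₂)
    (bn3 : B ⟶ N₃) (cn3 : X ⟶ N₃),
    ma ≫ an1 = mb ≫ bn1 → ma ≫ an2 = mc ≫ cn2 → mb ≫ bn3 = mc ≫ cn3 →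
    R ma mb an1 bn1 → R ma mc an2 cn2 → R mb mc bn3 cn3 →
    ∃ (N : E) (n1 : N₁ ⟶ N) (n2 : N₂ ⟶ N) (n3 : N₃ ⟶ N),
      an1 ≫ n1 = an2 ≫ n2 ∧ bn1 ≫ n1 = bn3 ≫ n3 ∧ cn2 ≫ n2 = cn3 ≫ n3 ∧
      R an1 an2 n1 n2 ∧ R bn1 bn3 n1 n3 ∧ R cn2 cn3 n2 n3

/-- `F` admits 3-completions with respect to `⫝`: every `⫝`-independent cube
whose seven non-terminal vertices (and the morphisms among them) are images of
`F` can be completed into the image of `F`. -/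
def Admits3Completions (F : C ⥤ D) (R : IndRel D) : Prop :=
  ∀ ⦃M₀ A B X N₁ N₂ N₃ : C⦄ ⦃N : D⦄
    (ma : M₀ ⟶ A) (mb : M₀ ⟶ B) (mc : M₀ ⟶ X)
    (an1 : A ⟶ N₁) (bn1 : B ⟶ N₁) (an2 : A ⟶ N₂) (cn2 : X ⟶ N₂)
    (bn3 : B ⟶ N₃) (cn3 : X ⟶ N₃)
    (m1 : F.obj N₁ ⟶ N) (m2 : F.obj N₂ ⟶ N) (m3 : F.obj N₃ ⟶ N),
    ma ≫ an1 = mb ≫ bn1 → ma ≫ an2 = mc ≫ cn2 → mb ≫ bn3 = mc ≫ cn3 →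
    F.map an1 ≫ m1 = F.map an2 ≫ m2 →
    F.map bn1 ≫ m1 = F.map bn3 ≫ m3 →
    F.map cn2 ≫ m2 = F.map cn3 ≫ m3 →
    R (F.map ma) (F.map mb) (F.map an1) (F.map bn1) →
    R (F.map ma) (F.map mc) (F.map an2) (F.map cn2) →
    R (F.map mb) (F.map mc) (F.map bn3) (F.map cn3) →
    R (F.map an1) (F.map an2) m1 m2 →
    R (F.map bn1) (F.map bn3) m1 m3 →
    R (F.map cn2) (F.map cn3) m2 m3 →
    ∃ (Nstar : C) (n1 : N₁ ⟶ Nstar) (n2 : N₂ ⟶ Nstar) (n3 : N₃ ⟶ Nstar)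
      (h : N ⟶ F.obj Nstar),
      F.map n1 = m1 ≫ h ∧ F.map n2 = m2 ≫ h ∧ F.map n3 = m3 ≫ h

/-- If `F` is faithful, `⫝` satisfies invariance and strong 3-amalgamation, and
`F` admits 3-completions, then `F⁻¹(⫝)` satisfies strong 3-amalgamation. -/
theorem admits3_lifts_strong3Amalgamation (F : C ⥤ D) [F.Faithful]
    (R : IndRel D) (hinv : R.Invariance)
    (h3 : R.Strong3Amalgamation) (hc : Admits3Completions F R) :
    (R.lift F).Strong3Amalgamation := by
  intro M₀ A B X N₁ N₂ N₃ ma mb mc an1 bn1 an2 cn2 bn3 cn3 h₁ h₂ h₃ r₁ r₂ r₃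
  obtain ⟨N, m1, m2, m3, c12, c13, c23, s12, s13, s23⟩ :=
    h3 (F.map ma) (F.map mb) (F.map mc) (F.map an1) (F.map bn1) (F.map an2)
      (F.map cn2) (F.map bn3) (F.map cn3)
      (by rw [← F.map_comp, ← F.map_comp, h₁])
      (by rw [← F.map_comp, ← F.map_comp, h₂])
      (by rw [← F.map_comp, ← F.map_comp, h₃]) r₁ r₂ r₃
  obtain ⟨Nstar, n1, n2, n3, h, e1, e2, e3⟩ :=
    hc ma mb mc an1 bn1 an2 cn2 bn3 cn3 m1 m2 m3 h₁ h₂ h₃ c12 c13 c23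
      r₁ r₂ r₃ s12 s13 s23
  refine ⟨Nstar, n1, n2, n3, ?_, ?_, ?_, ?_, ?_, ?_⟩
  · apply F.map_injective
    simp only [F.map_comp, e1, e2, ← Category.assoc, c12]
  · apply F.map_injective
    simp only [F.map_comp, e1, e3, ← Category.assoc, c13]
  · apply F.map_injective
    simp only [F.map_comp, e2, e3, ← Category.assoc, c23]
  · show R _ _ (F.map n1) (F.map n2)
    rw [e1, e2]
    exact (hinv _ _ _ _ h c12).mp s12
  · show R _ _ (F.map n1) (F.map n3)
    rw [e1, e3]
    exact (hinv _ _ _ _ h c13).mp s13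
  · show R _ _ (F.map n2) (F.map n3)
    rw [e2, e3]
    exact (hinv _ _ _ _ h c23).mp s23
end

section
/- In the category of sets with injective maps, the class of pullback squares forms an independence relation satisfying uniqueness: given two commuting squares of injections with the same base span X → A, X → B, cocone objects M and M', such that both squares are pullbacks (i.e. A ∩ B = X inside M and inside M'), there exist a set E and injections M → E, M' → E making the combined diagram commute. -/
universe u

/-- In the category of sets and injective maps, pullback squares satisfy
uniqueness: two pullback squares of injections over the same base span can be
amalgamated by injections into a common set. -/
theorem set_pullback_squares_uniqueness
    {X A B M M' : Type u}
    (xa : X → A) (xb : X → B) (am : A → M) (bm : B → M)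
    (am' : A → M') (bm' : B → M')
    (hxa : Function.Injective xa) (hxb : Function.Injective xb)
    (ham : Function.Injective am) (hbm : Function.Injective bm)
    (ham' : Function.Injective am') (hbm' : Function.Injective bm')
    (hsq : am ∘ xa = bm ∘ xb) (hsq' : am' ∘ xa = bm' ∘ xb)
    (hpb : ∀ (a : A) (b : B), am a = bm b → ∃ x, xa x = a ∧ xb x = b)
    (hpb' : ∀ (a : A) (b : B), am' a = bm' b → ∃ x, xa x = a ∧ xb x = b) :
    ∃ (E : Type u) (f : M → E) (g : M' → E),
      Function.Injective f ∧ Function.Injective g ∧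
      f ∘ am = g ∘ am' ∧ f ∘ bm = g ∘ bm' := by
  classical
  set g : M' → M ⊕ M' := fun m' =>
    if h : ∃ a, am' a = m' then Sum.inl (am h.choose)
    else if h2 : ∃ b, bm' b = m' then Sum.inl (bm h2.choose)
    else Sum.inr m' with hg
  -- characterization lemmas
  have key : ∀ m' m, g m' = Sum.inl m →
      (∃ a, am' a = m' ∧ am a = m) ∨ (∃ b, bm' b = m' ∧ bm b = m) := by
    intro m' m h
    rw [hg] at h
    dsimp only at h
    split_ifs at h with h1 h2
    · exact Or.inl ⟨h1.choose, h1.choose_spec, Sum.inl.inj h⟩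
    · exact Or.inr ⟨h2.choose, h2.choose_spec, Sum.inl.inj h⟩
  have key2 : ∀ m' n, g m' = Sum.inr n → m' = n := by
    intro m' n h
    rw [hg] at h
    dsimp only at h
    split_ifs at h with h1 h2
    exact Sum.inr.inj h
  -- a key fact: if am a = bm b then am' a = bm' b, and vice versa
  have cross : ∀ (a : A) (b : B), am a = bm b → am' a = bm' b := by
    intro a b h
    obtain ⟨x, hx1, hx2⟩ := hpb a b h
    rw [← hx1, ← hx2]
    exact congrFun hsq' x
  have cross' : ∀ (a : A) (b : B), am' a = bm' b → am a = bm b := by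
    intro a b h
    obtain ⟨x, hx1, hx2⟩ := hpb' a b h
    rw [← hx1, ← hx2]
    exact congrFun hsq x
  refine ⟨M ⊕ M', Sum.inl, g, Sum.inl_injective, ?_, ?_, ?_⟩
  · -- injectivity of g
    intro m1 m2 h
    rcases e : g m1 with m | n
    · rw [e] at h
      rcases key m1 m e with ⟨a1, ha1, ha1'⟩ | ⟨b1, hb1, hb1'⟩ <;>
        rcases key m2 m h.symm with ⟨a2, ha2, ha2'⟩ | ⟨b2, hb2, hb2'⟩
      · rw [← ha1, ← ha2, ham (ha1'.trans ha2'.symm)]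
      · rw [← ha1, ← hb2, cross a1 b2 (ha1'.trans hb2'.symm)]
      · rw [← hb1, ← ha2, ← cross a2 b1 (ha2'.trans hb1'.symm)]
      · rw [← hb1, ← hb2, hbm (hb1'.trans hb2'.symm)]
    · rw [e] at h
      rw [key2 m1 n e, key2 m2 n h.symm]
  · funext a
    have h1 : ∃ a', am' a' = am' a := ⟨a, rfl⟩
    show Sum.inl (am a) = g (am' a)
    rw [hg]
    dsimp only
    rw [dif_pos h1]
    rw [ham' h1.choose_spec]
  · funext b
    show Sum.inl (bm b) = g (bm' b)
    rw [hg]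
    dsimp only
    by_cases h1 : ∃ a, am' a = bm' b
    · rw [dif_pos h1]
      exact congrArg Sum.inl (cross' _ _ h1.choose_spec).symm
    · rw [dif_neg h1, dif_pos ⟨b, rfl⟩]
      exact congrArg (Sum.inl ∘ bm) (hbm' (⟨b, rfl⟩ : ∃ b', bm' b' = bm' b).choose_spec).symm
end
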